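/- Let a and ω be octonions such that a * ω = ω * conj(a). Then for every octonion b, a * (ω * b) = ω * (conj(a) * b). -/
import Mathlib


/-- The octonions, constructed from the quaternions by the Cayley–Dickson doubling. -/
@[ext] structure Octonion : Type where
  q1 : Quaternion ℝ
  q2 : Quaternion ℝ

namespace Octonion

noncomputable instance : Zero Octonion := ⟨⟨0, 0⟩⟩
noncomputable instance : One Octonion := ⟨⟨1, 0⟩⟩
noncomputable instance : Add Octonion := ⟨fun x y => ⟨x.q1 + y.q1, x.q2 + y.q2⟩⟩
noncomputable instance : Neg Octonion := ⟨fun x => ⟨-x.q1, -x.q2⟩⟩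
noncomputable instance : Sub Octonion := ⟨fun x y => ⟨x.q1 - y.q1, x.q2 - y.q2⟩⟩

/-- Cayley–Dickson multiplication: `(a,b)(c,d) = (ac - d*b, da + bc*)`. -/
noncomputable instance : Mul Octonion :=
  ⟨fun x y => ⟨x.q1 * y.q1 - star y.q2 * x.q2, y.q2 * x.q1 + x.q2 * star y.q1⟩⟩

noncomputable instance : SMul ℝ Octonion := ⟨fun r x => ⟨r • x.q1, r • x.q2⟩⟩

/-- Octonionic conjugation. -/
noncomputable def conj (x : Octonion) : Octonion := ⟨star x.q1, -x.q2⟩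

/-- The real part of an octonion. -/
noncomputable def re (x : Octonion) : ℝ := x.q1.re

/-- The real octonion corresponding to `r : ℝ`. -/
noncomputable def ofReal (r : ℝ) : Octonion := ⟨(r : Quaternion ℝ), 0⟩

/-- The imaginary part of an octonion. -/
noncomputable def im (x : Octonion) : Octonion := ⟨x.q1 - ((x.q1.re : ℝ) : Quaternion ℝ), x.q2⟩

/-- The Euclidean norm of an octonion (the standard norm of `ℝ⁸`). -/
noncomputable def norm (x : Octonion) : ℝ :=
  Real.sqrt (Quaternion.normSq x.q1 + Quaternion.normSq x.q2)

/-- The standard real inner product on `𝕆 ≅ ℝ⁸`. -/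
noncomputable def inner (x y : Octonion) : ℝ := re (x * conj y)

/-- Powers of an octonion (octonions are power-associative). -/
noncomputable def pow (x : Octonion) : ℕ → Octonion
  | 0 => 1
  | n + 1 => pow x n * x

/-- The associator of three octonions. -/
noncomputable def assoc (a b c : Octonion) : Octonion := (a * b) * c - a * (b * c)

end Octonion


namespace Octonion

lemma mul_q1' (x y : Octonion) : (x * y).q1 = x.q1 * y.q1 - star y.q2 * x.q2 := rfl
lemma mul_q2' (x y : Octonion) : (x * y).q2 = y.q2 * x.q1 + x.q2 * star y.q1 := rfl
lemma conj_q1' (x : Octonion) : (conj x).q1 = star x.q1 := rfl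
lemma conj_q2' (x : Octonion) : (conj x).q2 = -x.q2 := rfl

set_option maxHeartbeats 2000000 in
lemma key1 (a w b : Octonion) :
    ((a * w) * b).q1 - (a * (w * b)).q1
      = ((w * conj a) * b).q1 - (w * (conj a * b)).q1 := by
  simp only [mul_q1', mul_q2', conj_q1', conj_q2']
  ext <;>
    simp [Quaternion.re_mul, Quaternion.imI_mul, Quaternion.imJ_mul, Quaternion.imK_mul] <;>
    ring

set_option maxHeartbeats 2000000 in
lemma key2 (a w b : Octonion) :
    ((a * w) * b).q2 - (a * (w * b)).q2
      = ((w * conj a) * b).q2 - (w * (conj a * b)).q2 := by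
  simp only [mul_q1', mul_q2', conj_q1', conj_q2']
  ext <;>
    simp [Quaternion.re_mul, Quaternion.imI_mul, Quaternion.imJ_mul, Quaternion.imK_mul] <;>
    ring

end Octonion

open Octonion in
theorem octonion_swap_lemma (a ω : Octonion) (h : a * ω = ω * conj a)
    (b : Octonion) : a * (ω * b) = ω * (conj a * b) := by
  have hb : (a * ω) * b = (ω * conj a) * b := by rw [h]
  have h1 := congrArg Octonion.q1 hb
  have h2 := congrArg Octonion.q2 hb
  have k1 := Octonion.key1 a ω b
  have k2 := Octonion.key2 a ω b
  rw [h1] at k1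
  rw [h2] at k2
  exact Octonion.ext (sub_right_injective k1) (sub_right_injective k2)
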